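/- Functional observability is strictly stronger than the 'target observability' condition rank(𝒪 Fᵀ) = r: if rank[𝒪; F] = rank(𝒪) and rank(F) = r, then rank(𝒪 Fᵀ) = r; but the converse fails, as witnessed by the 4-dimensional system A with nonzero entries a₃₁, a₃₂, a₄₃ only, C = e₄ᵀ, F = e₂ᵀ, which satisfies rank(𝒪Fᵀ) = 1 yet rank[𝒪; F] = 4 > 3 = rank(𝒪). -/

import Mathlib

open Matrix

/-- The observability matrix `[C; CA; ...; CA^{n-1}]`. -/
def obsMat {n q : ℕ} (A : Matrix (Fin n) (Fin n) ℝ)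
    (C : Matrix (Fin q) (Fin n) ℝ) : Matrix (Fin n × Fin q) (Fin n) ℝ :=
  fun p k => (C * A ^ (p.1 : ℕ)) p.2 k

lemma rank_eq_of_mulVecLin_injective {m : Type*} [Fintype m] {n : ℕ}
    (M : Matrix m (Fin n) ℝ) (h : Function.Injective M.mulVecLin) : M.rank = n := by
  rw [Matrix.rank, LinearMap.finrank_range_of_inj h, Module.finrank_fin_fun]

lemma range_fromColumns {m n₁ n₂ : Type*} [Fintype m] [Fintype n₁] [Fintype n₂]
    (A : Matrix m n₁ ℝ) (B : Matrix m n₂ ℝ) :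
    LinearMap.range (fromCols A B).mulVecLin =
      LinearMap.range A.mulVecLin ⊔ LinearMap.range B.mulVecLin := by
  apply le_antisymm
  · rintro _ ⟨x, rfl⟩
    have hx : x = Sum.elim (x ∘ Sum.inl) (x ∘ Sum.inr) := by ext (i | i) <;> rfl
    rw [mulVecLin_apply, hx, fromCols_mulVec_sumElim]
    exact Submodule.add_mem_sup ⟨_, rfl⟩ ⟨_, rfl⟩
  · rw [sup_le_iff]
    constructor <;> rintro _ ⟨x, rfl⟩
    · exact ⟨Sum.elim x 0, by simp [fromCols_mulVec_sumElim]⟩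
    · exact ⟨Sum.elim 0 x, by simp [fromCols_mulVec_sumElim]⟩

lemma part1 (n q r : ℕ) (A : Matrix (Fin n) (Fin n) ℝ) (C : Matrix (Fin q) (Fin n) ℝ)
    (F : Matrix (Fin r) (Fin n) ℝ)
    (h1 : (fromRows (obsMat A C) F).rank = (obsMat A C).rank) (h2 : F.rank = r) :
    (obsMat A C * Fᵀ).rank = r := by
  set O := obsMat A C with hOdef
  -- row space of F is contained in row space of O
  have hfin : Module.finrank ℝ
      (LinearMap.range Oᵀ.mulVecLin ⊔ LinearMap.range Fᵀ.mulVecLin : Submodule ℝ (Fin n → ℝ)) =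
      Module.finrank ℝ (LinearMap.range Oᵀ.mulVecLin) := by
    have := rank_transpose (fromRows O F)
    rw [transpose_fromRows] at this
    have hL : (fromCols Oᵀ Fᵀ).rank = O.rank := this.trans h1
    rw [Matrix.rank, range_fromColumns] at hL
    rw [hL, ← Matrix.rank, rank_transpose]
  have hsup : LinearMap.range Oᵀ.mulVecLin ⊔ LinearMap.range Fᵀ.mulVecLin
      = LinearMap.range Oᵀ.mulVecLin :=
    (Submodule.eq_of_le_of_finrank_le le_sup_left hfin.le).symm
  have hF : LinearMap.range Fᵀ.mulVecLin ≤ LinearMap.range Oᵀ.mulVecLin :=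
    hsup ▸ le_sup_right
  -- Fᵀ.mulVecLin is injective
  have hFinj : Function.Injective Fᵀ.mulVecLin := by
    rw [← LinearMap.ker_eq_bot, ← Submodule.finrank_eq_zero]
    have h3 := Fᵀ.mulVecLin.finrank_range_add_finrank_ker
    rw [Module.finrank_fin_fun] at h3
    have hr : Module.finrank ℝ (LinearMap.range Fᵀ.mulVecLin) = r := by
      rw [← Matrix.rank, rank_transpose, h2]
    omega
  -- O is injective on the row space of O
  have hker : ∀ v : Fin n → ℝ, v ∈ LinearMap.range Oᵀ.mulVecLin → O.mulVecLin v = 0 → v = 0 := by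
    rintro _ ⟨x, rfl⟩ h
    have h' := congr_arg (dotProduct x) h
    rw [mulVecLin_apply, mulVecLin_apply, dotProduct_mulVec, dotProduct_zero,
      mulVec_transpose] at h'
    rw [mulVecLin_apply, mulVec_transpose]
    exact dotProduct_self_eq_zero.mp h'
  have hinj : Function.Injective (O * Fᵀ).mulVecLin := by
    rw [← LinearMap.ker_eq_bot, LinearMap.ker_eq_bot']
    intro x hx
    rw [mulVecLin_mul, LinearMap.comp_apply] at hx
    have h0 : Fᵀ.mulVecLin x = 0 := hker _ (hF ⟨x, rfl⟩) hx
    exact hFinj (by simpa using h0)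
  exact rank_eq_of_mulVecLin_injective _ hinj

set_option linter.unreachableTactic false in
set_option linter.unusedTactic false in
lemma obs_explicit (a31 a32 a43 : ℝ) :
    obsMat !![0, 0, 0, 0; 0, 0, 0, 0; a31, a32, 0, 0; 0, 0, a43, 0] !![0, 0, 0, 1] =
      Matrix.of fun p k => !![0,0,0,1; 0,0,a43,0; a43*a31, a43*a32, 0, 0; 0,0,0,0] p.1 k := by
  ext ⟨i, j⟩ k
  fin_cases i <;> fin_cases j <;> fin_cases k <;>
    simp [obsMat, pow_succ, Matrix.mul_apply, Fin.sum_univ_four, vecHead, vecTail] <;> ring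

set_option linter.unreachableTactic false in
set_option linter.unusedTactic false in
lemma part2 (a31 a32 a43 : ℝ) (h31 : a31 ≠ 0) (h32 : a32 ≠ 0) (h43 : a43 ≠ 0) :
    (obsMat !![0, 0, 0, 0; 0, 0, 0, 0; a31, a32, 0, 0; 0, 0, a43, 0] !![0, 0, 0, 1] *
        (!![0, 1, 0, 0] : Matrix (Fin 1) (Fin 4) ℝ)ᵀ).rank = 1 ∧
      (fromRows (obsMat !![0, 0, 0, 0; 0, 0, 0, 0; a31, a32, 0, 0; 0, 0, a43, 0] !![0, 0, 0, 1])
        (!![0, 1, 0, 0] : Matrix (Fin 1) (Fin 4) ℝ)).rank = 4 ∧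
      (obsMat !![0, 0, 0, 0; 0, 0, 0, 0; a31, a32, 0, 0; 0, 0, a43, 0] !![0, 0, 0, 1]).rank = 3 := by
  set O := obsMat !![0, 0, 0, 0; 0, 0, 0, 0; a31, a32, 0, 0; 0, 0, a43, 0]
    (!![0, 0, 0, 1] : Matrix (Fin 1) (Fin 4) ℝ) with hOdef
  have hO := obs_explicit a31 a32 a43
  rw [← hOdef] at hO
  refine ⟨?_, ?_, ?_⟩
  · -- rank (O * Fᵀ) = 1
    apply rank_eq_of_mulVecLin_injective
    rw [← LinearMap.ker_eq_bot, LinearMap.ker_eq_bot']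
    intro x hx
    rw [mulVecLin_apply] at hx
    have e := congr_fun hx (2, 0)
    simp [hO, mulVec, dotProduct, Matrix.mul_apply, Fin.sum_univ_four, Fin.sum_univ_one,
      vecHead, vecTail] at e
    ext i
    fin_cases i
    simpa using e.resolve_left (by simp [h43, h32])
  · -- rank (fromRows O F) = 4
    apply rank_eq_of_mulVecLin_injective
    rw [← LinearMap.ker_eq_bot, LinearMap.ker_eq_bot']
    intro x hx
    rw [mulVecLin_apply] at hx
    have e4 := congr_fun hx (Sum.inl (0, 0))
    have e3 := congr_fun hx (Sum.inl (1, 0))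
    have e1 := congr_fun hx (Sum.inl (2, 0))
    have e2 := congr_fun hx (Sum.inr 0)
    simp [hO, mulVec, dotProduct, Fin.sum_univ_four, vecHead, vecTail] at e1 e2 e3 e4
    have hx3 : x 2 = 0 := e3.resolve_left h43
    have hx1 : x 0 = 0 := by
      rw [e2, mul_zero, add_zero] at e1
      exact (mul_eq_zero.mp e1).resolve_left (mul_ne_zero h43 h31)
    ext i
    fin_cases i <;> simp [hx1, e2, hx3, e4]
  · -- rank O = 3
    set B : Matrix (Fin 3) (Fin 4) ℝ := !![0,0,0,1; 0,0,a43,0; a43*a31, a43*a32, 0, 0] with hB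
    have hBrank : B.rank = 3 := by
      rw [← rank_transpose]
      apply rank_eq_of_mulVecLin_injective
      rw [← LinearMap.ker_eq_bot, LinearMap.ker_eq_bot']
      intro x hx
      rw [mulVecLin_apply] at hx
      have e0 := congr_fun hx 3
      have e1 := congr_fun hx 2
      have e2 := congr_fun hx 0
      simp [hB, mulVec, dotProduct, Fin.sum_univ_three, vecHead, vecTail] at e0 e1 e2
      have h1 : x 1 = 0 := e1.resolve_left h43
      have h2 : x 2 = 0 := e2.resolve_left (by simp [h43, h31])
      ext i
      fin_cases i <;> simp [e0, h1, h2]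
    have hXB : O = Matrix.of (fun p i => if (p.1 : ℕ) = (i : ℕ) then (1:ℝ) else 0 :
        Matrix (Fin 4 × Fin 1) (Fin 3) ℝ) * B := by
      ext ⟨i, j⟩ k
      fin_cases i <;> fin_cases j <;> fin_cases k <;>
        simp [hO, hB, Matrix.mul_apply, Fin.sum_univ_three, vecHead, vecTail, show ((0:Fin 4):ℕ)=0 from rfl, show ((1:Fin 4):ℕ)=1 from rfl, show ((2:Fin 4):ℕ)=2 from rfl, show ((3:Fin 4):ℕ)=3 from rfl, show ((0:Fin 3):ℕ)=0 from rfl, show ((1:Fin 3):ℕ)=1 from rfl, show ((2:Fin 3):ℕ)=2 from rfl] <;> norm_num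
    have hYO : B = Matrix.of (fun i p => if (p.1 : ℕ) = (i : ℕ) then (1:ℝ) else 0 :
        Matrix (Fin 3) (Fin 4 × Fin 1) ℝ) * O := by
      ext i k
      fin_cases i <;> fin_cases k <;>
        simp [hO, Matrix.mul_apply, Fintype.sum_prod_type, Fin.sum_univ_four,
          Fin.sum_univ_one, hB, vecHead, vecTail, show ((0:Fin 4):ℕ)=0 from rfl, show ((1:Fin 4):ℕ)=1 from rfl, show ((2:Fin 4):ℕ)=2 from rfl, show ((3:Fin 4):ℕ)=3 from rfl, show ((0:Fin 3):ℕ)=0 from rfl, show ((1:Fin 3):ℕ)=1 from rfl, show ((2:Fin 3):ℕ)=2 from rfl] <;> norm_num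
    have hle : O.rank ≤ B.rank := by rw [hXB]; exact rank_mul_le_right _ _
    have hge : B.rank ≤ O.rank := by rw [hYO]; exact rank_mul_le_right _ _
    omega

theorem functional_observability_stronger_than_target_observability :
    -- functional observability plus full row rank of `F` implies `rank(𝒪 Fᵀ) = r`
    (∀ (n q r : ℕ) (A : Matrix (Fin n) (Fin n) ℝ) (C : Matrix (Fin q) (Fin n) ℝ)
        (F : Matrix (Fin r) (Fin n) ℝ),
      (fromRows (obsMat A C) F).rank = (obsMat A C).rank → F.rank = r →
        (obsMat A C * Fᵀ).rank = r) ∧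
    -- the converse fails: a 4-dimensional counterexample
    (∀ a31 a32 a43 : ℝ, a31 ≠ 0 → a32 ≠ 0 → a43 ≠ 0 →
      let A : Matrix (Fin 4) (Fin 4) ℝ :=
        !![0, 0, 0, 0; 0, 0, 0, 0; a31, a32, 0, 0; 0, 0, a43, 0]
      let C : Matrix (Fin 1) (Fin 4) ℝ := !![0, 0, 0, 1]
      let F : Matrix (Fin 1) (Fin 4) ℝ := !![0, 1, 0, 0]
      (obsMat A C * Fᵀ).rank = 1 ∧
        (fromRows (obsMat A C) F).rank = 4 ∧ (obsMat A C).rank = 3) := by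
  exact ⟨part1, fun a31 a32 a43 h31 h32 h43 => part2 a31 a32 a43 h31 h32 h43⟩
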